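/- Let W be a nonnull hypergraph and 𝒳 a collection of hypergraphs containing the null hypergraph 𝒩. Define π_W on 𝒳 by: π_W(X) = ⊕(𝒞(X) △ 𝒞(W)) if 𝒞(W) ⊆ 𝒞(X) or V(W) ∩ V(X) = ∅, and π_W(X) = X otherwise (△ denotes symmetric difference of component sets). Then (𝒳, π_W, {𝒩, W}) is a hypergraph transformation, with 𝒮-maximal subsets 𝒟_X = {𝒩, W} when 𝒞(W) ⊆ 𝒞(X) and 𝒟_X = {𝒩} otherwise. -/

import Mathlib

open Classical

universe u

/-- A (finite) hypergraph over a vertex universe `V`: a finite vertex set together with a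
finite set of nonempty hyperedges, each a subset of the vertex set. -/
structure FinHypergraph (V : Type u) where
  verts : Set V
  edges : Set (Set V)
  verts_finite : verts.Finite
  edges_finite : edges.Finite
  edge_sub : ∀ e ∈ edges, e ⊆ verts
  edge_nonempty : ∀ e ∈ edges, e.Nonempty

namespace FinHypergraph

variable {V : Type u}

/-- The null hypergraph `𝒩`. -/
def Null : FinHypergraph V :=
  ⟨∅, ∅, Set.finite_empty, Set.finite_empty, by simp, by simp⟩

/-- Direct sum (hypergraph union) of two hypergraphs. -/
def dSum (X Y : FinHypergraph V) : FinHypergraph V where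
  verts := X.verts ∪ Y.verts
  edges := X.edges ∪ Y.edges
  verts_finite := X.verts_finite.union Y.verts_finite
  edges_finite := X.edges_finite.union Y.edges_finite
  edge_sub := by
    rintro e (he | he)
    · exact (X.edge_sub e he).trans Set.subset_union_left
    · exact (Y.edge_sub e he).trans Set.subset_union_right
  edge_nonempty := by
    rintro e (he | he)
    · exact X.edge_nonempty e he
    · exact Y.edge_nonempty e he

/-- Direct sum of a set of (pairwise disjoint) hypergraphs; the null hypergraph when the
unions fail to be finite.  The direct sum of the empty set is the null hypergraph. -/
noncomputable def bigSum (A : Set (FinHypergraph V)) : FinHypergraph V :=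
  if h : (⋃ X ∈ A, X.verts).Finite ∧ (⋃ X ∈ A, X.edges).Finite then
    { verts := ⋃ X ∈ A, X.verts
      edges := ⋃ X ∈ A, X.edges
      verts_finite := h.1
      edges_finite := h.2
      edge_sub := by
        intro e he
        simp only [Set.mem_iUnion] at he
        obtain ⟨X, hX, heX⟩ := he
        intro v hv
        simp only [Set.mem_iUnion]
        exact ⟨X, hX, X.edge_sub e heX hv⟩
      edge_nonempty := by
        intro e he
        simp only [Set.mem_iUnion] at he
        obtain ⟨X, hX, heX⟩ := he
        exact X.edge_nonempty e heX }
  else Null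

/-- The direct difference `X ⊖ Z`: the unique hypergraph `W` vertex disjoint from `Z`
with `X = W ⊕ Z`, when it exists. -/
noncomputable def dDiff (X Z : FinHypergraph V) : FinHypergraph V :=
  if h : ∃ W : FinHypergraph V, Disjoint W.verts Z.verts ∧ X = dSum W Z then h.choose else X

/-- Two vertices are connected in `X` if there is a walk between them. -/
def Connected (X : FinHypergraph V) (a b : V) : Prop :=
  a ∈ X.verts ∧ Relation.ReflTransGen (fun u w => ∃ e ∈ X.edges, u ∈ e ∧ w ∈ e) a b

/-- `C` is a connected component of `X`: its vertex set is a connectivity class of `X`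
and its edges are the edges of `X` lying inside it. -/
def IsComponent (X C : FinHypergraph V) : Prop :=
  (∃ v ∈ X.verts, C.verts = {w | Connected X v w}) ∧
  C.edges = {e ∈ X.edges | e ⊆ C.verts}

/-- The set `𝒞(X)` of connected components of `X`. -/
def comps (X : FinHypergraph V) : Set (FinHypergraph V) := {C | IsComponent X C}

/-- Component disjointness: `𝒞(X) ∩ 𝒞(Y) = ∅`. -/
def CompDisjoint (X Y : FinHypergraph V) : Prop := comps X ∩ comps Y = ∅

/-- `X ∧ H`: the union (direct sum) of the components of `X` meeting some hyperedge in `H`. -/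
noncomputable def wedge (X : FinHypergraph V) (H : Set (Set V)) : FinHypergraph V :=
  bigSum {C ∈ comps X | ∃ f ∈ H, (f ∩ C.verts).Nonempty}

/-- `𝒮` is component maximal in `𝒳` with `𝒮`-maximal subsets given by `D`. -/
def IsMaximalSubsets (dom S : Set (FinHypergraph V))
    (D : FinHypergraph V → Set (FinHypergraph V)) : Prop :=
  ∀ X ∈ dom,
    D X ⊆ S ∧
    (D X).Pairwise CompDisjoint ∧
    (Null ∈ S → Null ∈ D X) ∧
    (∀ T ∈ D X, comps T ⊆ comps X) ∧
    (∀ s ∈ S, comps s ⊆ comps X → ∃ T ∈ D X, comps s ⊆ comps T)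

/-- `𝒮_X := { S ∈ 𝒟_X | V(π(S)) ∩ V(X ⊖ S) = ∅ }`. -/
noncomputable def SXof (π : FinHypergraph V → FinHypergraph V)
    (D : FinHypergraph V → Set (FinHypergraph V)) (X : FinHypergraph V) : Set (FinHypergraph V) :=
  {s ∈ D X | Disjoint (π s).verts (dDiff X s).verts}

/-- `(𝒳, π, 𝒮)` (with `𝒮`-maximal subsets `D`) is a hypergraph transformation:
nonredundancy, component maximality, and preservation of the direct sum decomposition. -/
def IsHGT (dom : Set (FinHypergraph V)) (π : FinHypergraph V → FinHypergraph V)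
    (S : Set (FinHypergraph V)) (D : FinHypergraph V → Set (FinHypergraph V)) : Prop :=
  (∀ s ∈ S, comps s ∩ comps (π s) = ∅) ∧
  (Null ∈ S → π Null ≠ Null) ∧
  IsMaximalSubsets dom S D ∧
  ∀ X ∈ dom,
    (π '' SXof π D X).Pairwise (fun A B => Disjoint A.verts B.verts) ∧
    Set.InjOn π (SXof π D X) ∧
    π X = dSum (dDiff X (bigSum (SXof π D X))) (bigSum (π '' SXof π D X))

/-- `𝒮'` is upward closed with respect to `𝒮`. -/
def UpwardClosed (S' S : Set (FinHypergraph V)) : Prop :=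
  ∀ s ∈ S', ∀ t ∈ S, comps s ⊆ comps t → t ∈ S'

end FinHypergraph


namespace FinHypergraph
variable {V : Type u}

lemma hext {X Y : FinHypergraph V} (hv : X.verts = Y.verts) (he : X.edges = Y.edges) : X = Y := by
  cases X; cases Y; simp_all

@[simp] lemma null_verts : (Null : FinHypergraph V).verts = ∅ := rfl
@[simp] lemma null_edges : (Null : FinHypergraph V).edges = ∅ := rfl

lemma comps_null : comps (Null : FinHypergraph V) = ∅ := by
  ext C
  simp [comps, IsComponent]

lemma connected_mem_right {X : FinHypergraph V} {a b : V} (h : Connected X a b) : b ∈ X.verts := by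
  obtain ⟨ha, hw⟩ := h
  induction hw with
  | refl => exact ha
  | tail _ hstep _ =>
    obtain ⟨e, he, _, hbe⟩ := hstep
    exact X.edge_sub e he hbe

lemma connected_refl {X : FinHypergraph V} {a : V} (ha : a ∈ X.verts) : Connected X a a :=
  ⟨ha, Relation.ReflTransGen.refl⟩

lemma connected_trans {X : FinHypergraph V} {a b c : V} (h1 : Connected X a b)
    (h2 : Connected X b c) : Connected X a c :=
  ⟨h1.1, h1.2.trans h2.2⟩

lemma connected_symm {X : FinHypergraph V} {a b : V} (h : Connected X a b) : Connected X b a := by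
  refine ⟨connected_mem_right h, ?_⟩
  have hs : Symmetric (fun u w => ∃ e ∈ X.edges, u ∈ e ∧ w ∈ e) := by
    rintro u w ⟨e, he, hu, hw⟩; exact ⟨e, he, hw, hu⟩
  exact (@Relation.ReflTransGen.stdSymm _ (fun u w => ∃ e ∈ X.edges, u ∈ e ∧ w ∈ e) ⟨fun a b h => hs h⟩).symm _ _ h.2

/-- The connected component of `X` containing `v`. -/
noncomputable def compOf (X : FinHypergraph V) (v : V) : FinHypergraph V where
  verts := {w | Connected X v w}
  edges := {e ∈ X.edges | e ⊆ {w | Connected X v w}}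
  verts_finite := X.verts_finite.subset (fun w hw => connected_mem_right hw)
  edges_finite := X.edges_finite.subset (fun e he => he.1)
  edge_sub := fun e he => he.2
  edge_nonempty := fun e he => X.edge_nonempty e he.1

lemma compOf_mem_comps {X : FinHypergraph V} {v : V} (hv : v ∈ X.verts) :
    compOf X v ∈ comps X := ⟨⟨v, hv, rfl⟩, rfl⟩

lemma mem_compOf {X : FinHypergraph V} {v : V} (hv : v ∈ X.verts) :
    v ∈ (compOf X v).verts := connected_refl hv

lemma comp_verts_sub {X C : FinHypergraph V} (hC : C ∈ comps X) : C.verts ⊆ X.verts := by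
  obtain ⟨⟨v, hv, hverts⟩, _⟩ := hC
  rw [hverts]
  exact fun w hw => connected_mem_right hw

lemma comp_edges_sub {X C : FinHypergraph V} (hC : C ∈ comps X) : C.edges ⊆ X.edges := by
  rw [hC.2]; exact fun e he => he.1

lemma comp_verts_nonempty {X C : FinHypergraph V} (hC : C ∈ comps X) : C.verts.Nonempty := by
  obtain ⟨⟨v, hv, hverts⟩, _⟩ := hC
  exact ⟨v, hverts ▸ connected_refl hv⟩

lemma comps_eq_of_mem {X C D : FinHypergraph V} (hC : C ∈ comps X) (hD : D ∈ comps X)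
    {w : V} (hwC : w ∈ C.verts) (hwD : w ∈ D.verts) : C = D := by
  obtain ⟨⟨v, hv, hverts⟩, hE⟩ := hC
  obtain ⟨⟨u, hu, hverts'⟩, hE'⟩ := hD
  rw [hverts] at hwC
  rw [hverts'] at hwD
  have hvu : ∀ x, Connected X v x ↔ Connected X u x := fun x =>
    ⟨fun h => connected_trans (connected_trans hwD (connected_symm hwC)) h,
     fun h => connected_trans (connected_trans hwC (connected_symm hwD)) h⟩
  have hveq : C.verts = D.verts := by
    rw [hverts, hverts']; ext x; exact hvu x
  exact hext hveq (by rw [hE, hE', hveq])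

lemma comps_disjoint {X C D : FinHypergraph V} (hC : C ∈ comps X) (hD : D ∈ comps X)
    (hne : C ≠ D) : Disjoint C.verts D.verts := by
  rw [Set.disjoint_left]
  intro w hwC hwD
  exact hne (comps_eq_of_mem hC hD hwC hwD)

lemma edge_mem_compOf {X : FinHypergraph V} {e : Set V} (he : e ∈ X.edges) {v : V} (hv : v ∈ e) :
    e ∈ (compOf X v).edges := by
  refine ⟨he, fun w hw => ?_⟩
  exact ⟨X.edge_sub e he hv, Relation.ReflTransGen.single ⟨e, he, hv, hw⟩⟩

lemma iUnion_comps_verts (X : FinHypergraph V) : ⋃ C ∈ comps X, C.verts = X.verts := by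
  apply Set.Subset.antisymm
  · exact Set.iUnion₂_subset fun C hC => comp_verts_sub hC
  · intro v hv
    exact Set.mem_iUnion₂.2 ⟨compOf X v, compOf_mem_comps hv, mem_compOf hv⟩

lemma iUnion_comps_edges (X : FinHypergraph V) : ⋃ C ∈ comps X, C.edges = X.edges := by
  apply Set.Subset.antisymm
  · exact Set.iUnion₂_subset fun C hC => comp_edges_sub hC
  · intro e he
    obtain ⟨v, hv⟩ := X.edge_nonempty e he
    exact Set.mem_iUnion₂.2 ⟨compOf X v, compOf_mem_comps (X.edge_sub e he hv),
      edge_mem_compOf he hv⟩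

lemma bigSum_verts {A : Set (FinHypergraph V)} (h1 : (⋃ X ∈ A, X.verts).Finite)
    (h2 : (⋃ X ∈ A, X.edges).Finite) : (bigSum A).verts = ⋃ X ∈ A, X.verts := by
  rw [bigSum, dif_pos ⟨h1, h2⟩]

lemma bigSum_edges {A : Set (FinHypergraph V)} (h1 : (⋃ X ∈ A, X.verts).Finite)
    (h2 : (⋃ X ∈ A, X.edges).Finite) : (bigSum A).edges = ⋃ X ∈ A, X.edges := by
  rw [bigSum, dif_pos ⟨h1, h2⟩]

lemma bigSum_empty : bigSum (∅ : Set (FinHypergraph V)) = Null := by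
  apply hext
  · rw [bigSum_verts] <;> simp
  · rw [bigSum_edges] <;> simp

lemma bigSum_singleton (X : FinHypergraph V) : bigSum ({X} : Set (FinHypergraph V)) = X := by
  apply hext
  · rw [bigSum_verts] <;> simp [X.verts_finite, X.edges_finite]
  · rw [bigSum_edges] <;> simp [X.verts_finite, X.edges_finite]

lemma bigSum_comps (X : FinHypergraph V) : bigSum (comps X) = X := by
  apply hext
  · rw [bigSum_verts] <;>
      simp only [iUnion_comps_verts, iUnion_comps_edges, X.verts_finite, X.edges_finite]
  · rw [bigSum_edges] <;>
      simp only [iUnion_comps_verts, iUnion_comps_edges, X.verts_finite, X.edges_finite]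

lemma dSum_null (X : FinHypergraph V) : dSum X Null = X := by
  apply hext <;> simp [dSum]

lemma dDiff_eq {X Y Z : FinHypergraph V} (hd : Disjoint Y.verts Z.verts) (hx : X = dSum Y Z) :
    dDiff X Z = Y := by
  have hex : ∃ W : FinHypergraph V, Disjoint W.verts Z.verts ∧ X = dSum W Z := ⟨Y, hd, hx⟩
  rw [dDiff, dif_pos hex]
  obtain ⟨hd', hx'⟩ := hex.choose_spec
  set U := hex.choose
  have hv : U.verts ∪ Z.verts = Y.verts ∪ Z.verts := by
    have := hx'.symm.trans hx
    exact congrArg verts this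
  have he : U.edges ∪ Z.edges = Y.edges ∪ Z.edges := congrArg edges (hx'.symm.trans hx)
  have hed : ∀ (T : FinHypergraph V), Disjoint T.verts Z.verts → T.edges ∩ Z.edges ⊆ ∅ := by
    intro T hdT e ⟨heT, heZ⟩
    obtain ⟨v, hv⟩ := T.edge_nonempty e heT
    exact absurd (Set.disjoint_left.1 hdT (T.edge_sub e heT hv)) (by simp [Z.edge_sub e heZ hv])
  apply hext
  · have h1 : (U.verts ∪ Z.verts) \ Z.verts = U.verts := Set.union_diff_cancel_right
      (by simpa [Set.disjoint_iff_inter_eq_empty.1 hd'] using hd'.le_bot)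
    have h2 : (Y.verts ∪ Z.verts) \ Z.verts = Y.verts := Set.union_diff_cancel_right
      (by simpa using hd.le_bot)
    rw [← h1, ← h2, hv]
  · have h1 : (U.edges ∪ Z.edges) \ Z.edges = U.edges :=
      Set.union_diff_cancel_right (hed U hd')
    have h2 : (Y.edges ∪ Z.edges) \ Z.edges = Y.edges :=
      Set.union_diff_cancel_right (hed Y hd)
    rw [← h1, ← h2, he]

lemma dDiff_null (X : FinHypergraph V) : dDiff X Null = X :=
  dDiff_eq (by simp) (dSum_null X).symm

end FinHypergraph
namespace FinHypergraph
variable {V : Type u}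

lemma comps_sub_verts_sub {W X : FinHypergraph V} (h : comps W ⊆ comps X) :
    W.verts ⊆ X.verts := by
  rw [← iUnion_comps_verts W]
  exact Set.iUnion₂_subset fun C hC => comp_verts_sub (h hC)

lemma decompA {W X : FinHypergraph V} (h : comps W ⊆ comps X) :
    Disjoint (bigSum (comps X \ comps W)).verts W.verts ∧
    X = dSum (bigSum (comps X \ comps W)) W := by
  have hvf : (⋃ C ∈ comps X \ comps W, C.verts).Finite :=
    X.verts_finite.subset (Set.iUnion₂_subset fun C hC => comp_verts_sub hC.1)
  have hef : (⋃ C ∈ comps X \ comps W, C.edges).Finite :=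
    X.edges_finite.subset (Set.iUnion₂_subset fun C hC => comp_edges_sub hC.1)
  have hv := bigSum_verts hvf hef
  have he := bigSum_edges hvf hef
  have hdisj : Disjoint (bigSum (comps X \ comps W)).verts W.verts := by
    rw [hv, Set.disjoint_left]
    intro w hw hwW
    simp only [Set.mem_iUnion, exists_prop] at hw
    obtain ⟨C, hC, hwC⟩ := hw
    rw [← iUnion_comps_verts W] at hwW
    simp only [Set.mem_iUnion, exists_prop] at hwW
    obtain ⟨D, hD, hwD⟩ := hwW
    exact hC.2 ((comps_eq_of_mem hC.1 (h hD) hwC hwD) ▸ hD)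
  refine ⟨hdisj, hext ?_ ?_⟩
  · show X.verts = _ ∪ _
    rw [hv]
    apply Set.Subset.antisymm
    · intro v hvX
      by_cases hc : compOf X v ∈ comps W
      · exact Or.inr (comp_verts_sub hc (mem_compOf hvX))
      · exact Or.inl (Set.mem_iUnion₂.2 ⟨compOf X v, ⟨compOf_mem_comps hvX, hc⟩, mem_compOf hvX⟩)
    · refine Set.union_subset ?_ (comps_sub_verts_sub h)
      exact Set.iUnion₂_subset fun C hC => comp_verts_sub hC.1
  · show X.edges = _ ∪ _
    rw [he]
    apply Set.Subset.antisymm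
    · intro e heX
      obtain ⟨v, hv⟩ := X.edge_nonempty e heX
      have hvX : v ∈ X.verts := X.edge_sub e heX hv
      have hce : e ∈ (compOf X v).edges := edge_mem_compOf heX hv
      by_cases hc : compOf X v ∈ comps W
      · refine Or.inr ?_
        have := hc.2
        rw [this] at hce
        exact hce.1
      · exact Or.inl (Set.mem_iUnion₂.2 ⟨compOf X v, ⟨compOf_mem_comps hvX, hc⟩, hce⟩)
    · refine Set.union_subset ?_ ?_
      · exact Set.iUnion₂_subset fun C hC => comp_edges_sub hC.1
      · rw [← iUnion_comps_edges W]
        exact Set.iUnion₂_subset fun C hC => comp_edges_sub (h hC)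

lemma bigSum_union_comps (X Y : FinHypergraph V) :
    bigSum (comps X ∪ comps Y) = dSum X Y := by
  have hv : ⋃ C ∈ comps X ∪ comps Y, C.verts = X.verts ∪ Y.verts := by
    rw [Set.biUnion_union, iUnion_comps_verts, iUnion_comps_verts]
  have he : ⋃ C ∈ comps X ∪ comps Y, C.edges = X.edges ∪ Y.edges := by
    rw [Set.biUnion_union, iUnion_comps_edges, iUnion_comps_edges]
  have h1 : (⋃ C ∈ comps X ∪ comps Y, C.verts).Finite := by
    rw [hv]; exact X.verts_finite.union Y.verts_finite
  have h2 : (⋃ C ∈ comps X ∪ comps Y, C.edges).Finite := by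
    rw [he]; exact X.edges_finite.union Y.edges_finite
  exact hext (by rw [bigSum_verts h1 h2, hv]; rfl) (by rw [bigSum_edges h1 h2, he]; rfl)

end FinHypergraph
open FinHypergraph

theorem stmt19 {V : Type u} (W : FinHypergraph V) (hW : W.verts.Nonempty)
    (𝒳 : Set (FinHypergraph V)) (hN : Null ∈ 𝒳) :
    IsHGT 𝒳
      (fun X => if comps W ⊆ comps X ∨ Disjoint W.verts X.verts
        then bigSum (symmDiff (comps X) (comps W)) else X)
      {Null, W}
      (fun X => if comps W ⊆ comps X then ({Null, W} : Set (FinHypergraph V))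
        else {Null}) := by
  have hWN : W ≠ Null := by
    intro h; rw [h] at hW; simp at hW
  set π : FinHypergraph V → FinHypergraph V := fun X =>
    if comps W ⊆ comps X ∨ Disjoint W.verts X.verts
    then bigSum (symmDiff (comps X) (comps W)) else X with hπdef
  set D : FinHypergraph V → Set (FinHypergraph V) := fun X =>
    if comps W ⊆ comps X then ({Null, W} : Set (FinHypergraph V)) else {Null} with hDdef
  have hπN : π Null = W := by
    simp only [hπdef]
    rw [if_pos (Or.inr (by simp)), comps_null]
    have h : symmDiff (∅ : Set (FinHypergraph V)) (comps W) = comps W := by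
      simp [Set.symmDiff_def]
    rw [h, bigSum_comps]
  have hπW : π W = Null := by
    simp only [hπdef]
    rw [if_pos (Or.inl subset_rfl)]
    have h : symmDiff (comps W) (comps W) = (∅ : Set (FinHypergraph V)) := by
      simp [Set.symmDiff_def]
    rw [h, bigSum_empty]
  refine ⟨?_, ?_, ?_, ?_⟩
  · -- nonredundancy
    intro s hs
    simp only [Set.mem_insert_iff, Set.mem_singleton_iff] at hs
    rcases hs with rfl | rfl
    · rw [comps_null]; simp
    · rw [hπW, comps_null]; simp
  · intro _
    rw [hπN]; exact hWN
  · -- maximal subsets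
    intro X _
    by_cases hc : comps W ⊆ comps X
    · have hDX : D X = {Null, W} := by rw [hDdef]; simp [hc]
      rw [hDX]
      refine ⟨subset_rfl, ?_, fun _ => Set.mem_insert _ _, ?_, ?_⟩
      · intro a ha b hb hab
        simp only [Set.mem_insert_iff, Set.mem_singleton_iff] at ha hb
        rcases ha with rfl | rfl <;> rcases hb with rfl | rfl <;>
          first
          | exact absurd rfl hab
          | simp [CompDisjoint, comps_null]
      · intro T hT
        simp only [Set.mem_insert_iff, Set.mem_singleton_iff] at hT
        rcases hT with rfl | rfl
        · rw [comps_null]; exact Set.empty_subset _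
        · exact hc
      · intro s hs hsX
        exact ⟨s, hs, subset_rfl⟩
    · have hDX : D X = {Null} := by rw [hDdef]; simp [hc]
      rw [hDX]
      refine ⟨by simp, Set.subsingleton_singleton.pairwise _, fun _ => rfl, ?_, ?_⟩
      · intro T hT
        rw [Set.mem_singleton_iff] at hT
        rw [hT, comps_null]; exact Set.empty_subset _
      · intro s hs hsX
        simp only [Set.mem_insert_iff, Set.mem_singleton_iff] at hs
        rcases hs with rfl | rfl
        · exact ⟨Null, rfl, subset_rfl⟩
        · exact absurd hsX hc
  · -- main decomposition
    intro X _
    by_cases hc : comps W ⊆ comps X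
    · have hDX : D X = {Null, W} := by rw [hDdef]; simp [hc]
      obtain ⟨hdisj, hdecomp⟩ := decompA hc
      have hdXW : dDiff X W = bigSum (comps X \ comps W) := dDiff_eq hdisj hdecomp
      have hSX : SXof π D X = {W} := by
        ext s
        simp only [SXof, Set.mem_setOf_eq, hDX, Set.mem_insert_iff,
          Set.mem_singleton_iff]
        constructor
        · rintro ⟨rfl | rfl, hd⟩
          · rw [hπN, dDiff_null] at hd
            obtain ⟨v, hv⟩ := hW
            exact ((Set.disjoint_left.1 hd hv) (comps_sub_verts_sub hc hv)).elim
          · rfl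
        · rintro rfl
          exact ⟨Or.inr rfl, by rw [hπW]; simp⟩
      rw [hSX]
      refine ⟨?_, Set.subsingleton_singleton.injOn _, ?_⟩
      · rw [Set.image_singleton]; exact Set.pairwise_singleton _ _
      · rw [Set.image_singleton, hπW, bigSum_singleton, bigSum_singleton, hdXW, dSum_null]
        simp only [hπdef]
        rw [if_pos (Or.inl hc), symmDiff_of_ge hc]
    · have hDX : D X = {Null} := by rw [hDdef]; simp [hc]
      by_cases hd : Disjoint W.verts X.verts
      · have hSX : SXof π D X = {Null} := by
          ext s
          simp only [SXof, Set.mem_setOf_eq, hDX, Set.mem_singleton_iff]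
          constructor
          · rintro ⟨rfl, _⟩; rfl
          · rintro rfl
            exact ⟨rfl, by rw [hπN, dDiff_null]; exact hd⟩
        rw [hSX]
        refine ⟨?_, Set.subsingleton_singleton.injOn _, ?_⟩
        · rw [Set.image_singleton]; exact Set.pairwise_singleton _ _
        · rw [Set.image_singleton, hπN, bigSum_singleton, bigSum_singleton, dDiff_null]
          have hdc : Disjoint (comps X) (comps W) := by
            rw [Set.disjoint_left]
            intro C hCX hCW
            obtain ⟨v, hv⟩ := comp_verts_nonempty hCX
            exact (Set.disjoint_right.1 hd (comp_verts_sub hCX hv)) (comp_verts_sub hCW hv)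
          simp only [hπdef]
          rw [if_pos (Or.inr hd), hdc.symmDiff_eq_sup]
          exact bigSum_union_comps X W
      · have hSX : SXof π D X = ∅ := by
          ext s
          simp only [SXof, Set.mem_setOf_eq, hDX, Set.mem_singleton_iff,
            Set.mem_empty_iff_false, iff_false, not_and]
          rintro rfl hds
          rw [hπN, dDiff_null] at hds
          exact hd hds
        rw [hSX]
        refine ⟨by simp, by simp, ?_⟩
        rw [Set.image_empty, bigSum_empty, dDiff_null, dSum_null]
        simp only [hπdef]
        rw [if_neg (fun h => h.elim hc hd)]
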